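/- Assume the feasible family F is nonempty. Then the family 𝓕̃ of all extendable subsets of V is (the independent-set family of) a matroid on V; that is: (i) 𝓕̃ ≠ ∅; (ii) if A ⊆ B and B ∈ 𝓕̃ then A ∈ 𝓕̃; and (iii) if A, B ∈ 𝓕̃ with |A| < |B|, then there exists e ∈ B \ A such that A ∪ {e} ∈ 𝓕̃. -/
import Mathlib


open Finset

/-- The feasible family `F`: subsets of `V` of size at most `k` whose intersection with
each color class `Vc c` has cardinality between `ℓ c` and `u c`. -/
def Feasible {α : Type*} [DecidableEq α] {C : ℕ} (V : Finset α) (Vc : Fin C → Finset α)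
    (ℓ u : Fin C → ℕ) (k : ℕ) (S : Finset α) : Prop :=
  S ⊆ V ∧ S.card ≤ k ∧ ∀ c, ℓ c ≤ (S ∩ Vc c).card ∧ (S ∩ Vc c).card ≤ u c

/-- A set is extendable if it is contained in some feasible set. -/
def Extendable {α : Type*} [DecidableEq α] {C : ℕ} (V : Finset α) (Vc : Fin C → Finset α)
    (ℓ u : Fin C → ℕ) (k : ℕ) (S : Finset α) : Prop :=
  ∃ S', Feasible V Vc ℓ u k S' ∧ S ⊆ S'

section Aux

variable {α : Type*} [DecidableEq α] {C : ℕ} {V : Finset α} {Vc : Fin C → Finset α}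
  {ℓ u : Fin C → ℕ} {k : ℕ}

lemma card_eq_sum_inter (hV : V = Finset.univ.biUnion Vc)
    (hdisj : ∀ c d : Fin C, c ≠ d → Disjoint (Vc c) (Vc d))
    {S : Finset α} (hS : S ⊆ V) : S.card = ∑ c, (S ∩ Vc c).card := by
  have hrep : S = Finset.univ.biUnion (fun c => S ∩ Vc c) := by
    apply Finset.Subset.antisymm
    · intro x hx
      have hxV := hS hx
      rw [hV] at hxV
      simp only [mem_biUnion, mem_univ, true_and] at hxV ⊢
      obtain ⟨c, hc⟩ := hxV
      exact ⟨c, mem_inter.mpr ⟨hx, hc⟩⟩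
    · intro x hx
      simp only [mem_biUnion] at hx
      obtain ⟨c, _, hc⟩ := hx
      exact (mem_inter.mp hc).1
  conv_lhs => rw [hrep]
  rw [card_biUnion]
  intro c _ d _ hcd
  exact (hdisj c d hcd).mono inter_subset_right inter_subset_right

lemma extendable_iff (hV : V = Finset.univ.biUnion Vc)
    (hdisj : ∀ c d : Fin C, c ≠ d → Disjoint (Vc c) (Vc d))
    (hlu : ∀ c, ℓ c ≤ u c)
    (hne : ∃ S, Feasible V Vc ℓ u k S) (S : Finset α) :
    Extendable V Vc ℓ u k S ↔
      S ⊆ V ∧ (∀ c, (S ∩ Vc c).card ≤ u c) ∧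
        ∑ c, max (ℓ c) ((S ∩ Vc c).card) ≤ k := by
  constructor
  · rintro ⟨S', ⟨hS'V, hS'k, hS'c⟩, hSS'⟩
    refine ⟨hSS'.trans hS'V, fun c =>
      le_trans (card_le_card (inter_subset_inter hSS' Finset.Subset.rfl)) (hS'c c).2, ?_⟩
    calc ∑ c, max (ℓ c) ((S ∩ Vc c).card)
        ≤ ∑ c, (S' ∩ Vc c).card := by
          apply sum_le_sum
          intro c _
          exact max_le (hS'c c).1 (card_le_card (inter_subset_inter hSS' Finset.Subset.rfl))
      _ = S'.card := (card_eq_sum_inter hV hdisj hS'V).symm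
      _ ≤ k := hS'k
  · rintro ⟨hSV, hSu, hSk⟩
    obtain ⟨S₀, hS₀V, hS₀k, hS₀c⟩ := hne
    have hℓV : ∀ c, ℓ c ≤ (Vc c).card := fun c =>
      le_trans (hS₀c c).1 (card_le_card inter_subset_right)
    have hsd : ∀ c : Fin C, Vc c \ S = Vc c \ (S ∩ Vc c) := by
      intro c
      ext x
      simp only [mem_sdiff, mem_inter]
      tauto
    have hTex : ∀ c, ∃ t ⊆ Vc c \ S, t.card = ℓ c - (S ∩ Vc c).card := by
      intro c
      apply exists_subset_card_eq
      have h1 : (Vc c \ S).card = (Vc c).card - (S ∩ Vc c).card := by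
        rw [hsd c, card_sdiff_of_subset inter_subset_right]
      have h2 := hℓV c
      omega
    choose T hT1 hT2 using hTex
    set S' := S ∪ Finset.univ.biUnion T with hS'def
    have hinter : ∀ c, S' ∩ Vc c = (S ∩ Vc c) ∪ T c := by
      intro c
      rw [hS'def, union_inter_distrib_right]
      congr 1
      apply Finset.Subset.antisymm
      · intro x hx
        obtain ⟨hx1, hx2⟩ := mem_inter.mp hx
        obtain ⟨d, _, hd⟩ := mem_biUnion.mp hx1
        rcases eq_or_ne d c with rfl | hdc
        · exact hd
        · have hxd : x ∈ Vc d := (mem_sdiff.mp (hT1 d hd)).1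
          exact absurd hx2 (disjoint_left.mp (hdisj d c hdc) hxd)
      · intro x hx
        exact mem_inter.mpr ⟨mem_biUnion.mpr ⟨c, mem_univ c, hx⟩,
          (mem_sdiff.mp (hT1 c hx)).1⟩
    have hcardc : ∀ c, (S' ∩ Vc c).card = max (ℓ c) ((S ∩ Vc c).card) := by
      intro c
      rw [hinter c, card_union_of_disjoint, hT2 c]
      · omega
      · rw [disjoint_left]
        intro x hx hx'
        exact (mem_sdiff.mp (hT1 c hx')).2 (mem_inter.mp hx).1
    have hVcV : ∀ c : Fin C, Vc c ⊆ V := by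
      intro c
      rw [hV]
      exact subset_biUnion_of_mem Vc (mem_univ c)
    have hS'V : S' ⊆ V := by
      apply union_subset hSV
      apply biUnion_subset.mpr
      intro c _
      exact (hT1 c).trans (sdiff_subset.trans (hVcV c))
    refine ⟨S', ⟨hS'V, ?_, fun c => ?_⟩, subset_union_left⟩
    · rw [card_eq_sum_inter hV hdisj hS'V]
      calc ∑ c, (S' ∩ Vc c).card = ∑ c, max (ℓ c) ((S ∩ Vc c).card) :=
            sum_congr rfl fun c _ => hcardc c
        _ ≤ k := hSk
    · rw [hcardc c]
      exact ⟨le_max_left _ _, max_le (hlu c) (hSu c)⟩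

end Aux

/-- The family of extendable subsets of `V` satisfies the independent-set axioms of
a matroid: nonemptiness, downward closure, and the augmentation property. -/
theorem extendable_is_matroid {α : Type*} [DecidableEq α] (C : ℕ) (V : Finset α)
    (Vc : Fin C → Finset α)
    (hV : V = Finset.univ.biUnion Vc)
    (hdisj : ∀ c d : Fin C, c ≠ d → Disjoint (Vc c) (Vc d))
    (ℓ u : Fin C → ℕ) (hlu : ∀ c, ℓ c ≤ u c) (k : ℕ)
    (hne : ∃ S, Feasible V Vc ℓ u k S) :
    (∃ S : Finset α, Extendable V Vc ℓ u k S) ∧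
    (∀ A B : Finset α, A ⊆ B → Extendable V Vc ℓ u k B → Extendable V Vc ℓ u k A) ∧
    (∀ A B : Finset α, Extendable V Vc ℓ u k A → Extendable V Vc ℓ u k B →
      A.card < B.card → ∃ e ∈ B \ A, Extendable V Vc ℓ u k (insert e A)) := by
  refine ⟨?_, ?_, ?_⟩
  · obtain ⟨S, hS⟩ := hne
    exact ⟨S, S, hS, Finset.Subset.rfl⟩
  · rintro A B hAB ⟨S', h1, h2⟩
    exact ⟨S', h1, hAB.trans h2⟩
  · intro A B hA hB hcard
    rw [extendable_iff hV hdisj hlu hne] at hA hB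
    obtain ⟨hAV, hAu, hAk⟩ := hA
    obtain ⟨hBV, hBu, hBk⟩ := hB
    have hsum : ∑ c, (A ∩ Vc c).card < ∑ c, (B ∩ Vc c).card := by
      rw [← card_eq_sum_inter hV hdisj hAV, ← card_eq_sum_inter hV hdisj hBV]
      exact hcard
    have pick : ∀ c, (A ∩ Vc c).card < (B ∩ Vc c).card →
        ∃ e, e ∈ B \ A ∧ e ∈ Vc c ∧ e ∉ A := by
      intro c hc
      obtain ⟨e, he1, he2⟩ : ∃ e ∈ B ∩ Vc c, e ∉ A ∩ Vc c := by
        by_contra h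
        push_neg at h
        exact absurd (card_le_card h) (not_le.mpr hc)
      have heB := (mem_inter.mp he1).1
      have hec := (mem_inter.mp he1).2
      have heA : e ∉ A := fun h => he2 (mem_inter.mpr ⟨h, hec⟩)
      exact ⟨e, mem_sdiff.mpr ⟨heB, heA⟩, hec, heA⟩
    have hins : ∀ (c : Fin C) (e : α), e ∈ Vc c → e ∉ A → ∀ d,
        ((insert e A) ∩ Vc d).card = (A ∩ Vc d).card + if d = c then 1 else 0 := by
      intro c e hec heA d
      rcases eq_or_ne d c with rfl | hdc
      · rw [insert_inter_of_mem hec, card_insert_of_notMem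
          (fun h => heA (mem_inter.mp h).1)]
        simp
      · rw [insert_inter_of_notMem (fun h => disjoint_left.mp (hdisj d c hdc) h hec)]
        simp [hdc]
    by_cases hcase : ∃ c, (A ∩ Vc c).card < (B ∩ Vc c).card ∧ (A ∩ Vc c).card < ℓ c
    · obtain ⟨c, hab, haℓ⟩ := hcase
      obtain ⟨e, heBA, hec, heA⟩ := pick c hab
      refine ⟨e, heBA, ?_⟩
      rw [extendable_iff hV hdisj hlu hne]
      refine ⟨insert_subset (hBV (mem_sdiff.mp heBA).1) hAV, ?_, ?_⟩
      · intro d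
        rw [hins c e hec heA d]
        rcases eq_or_ne d c with rfl | hdc
        · rw [if_pos rfl]
          have := hlu d
          omega
        · simpa [hdc] using hAu d
      · calc ∑ d, max (ℓ d) (((insert e A) ∩ Vc d).card)
            = ∑ d, max (ℓ d) ((A ∩ Vc d).card) := by
              apply sum_congr rfl
              intro d _
              rw [hins c e hec heA d]
              rcases eq_or_ne d c with rfl | hdc
              · rw [if_pos rfl]
                omega
              · simp [hdc]
          _ ≤ k := hAk
    · push_neg at hcase
      have hexc : ∃ c, (A ∩ Vc c).card < (B ∩ Vc c).card := by
        by_contra h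
        push_neg at h
        exact absurd (sum_le_sum fun c _ => h c) (not_le.mpr hsum)
      obtain ⟨c, hab⟩ := hexc
      obtain ⟨e, heBA, hec, heA⟩ := pick c hab
      refine ⟨e, heBA, ?_⟩
      rw [extendable_iff hV hdisj hlu hne]
      refine ⟨insert_subset (hBV (mem_sdiff.mp heBA).1) hAV, ?_, ?_⟩
      · intro d
        rw [hins c e hec heA d]
        rcases eq_or_ne d c with rfl | hdc
        · rw [if_pos rfl]
          have := hBu d
          omega
        · simpa [hdc] using hAu d
      · have hmono : ∑ d, max (ℓ d) ((A ∩ Vc d).card) <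
            ∑ d, max (ℓ d) ((B ∩ Vc d).card) := by
          have hpt : ∀ d ∈ Finset.univ, max (ℓ d) ((A ∩ Vc d).card) + (B ∩ Vc d).card ≤
              max (ℓ d) ((B ∩ Vc d).card) + (A ∩ Vc d).card := by
            intro d _
            have := hcase d
            omega
          have hs := sum_le_sum hpt
          rw [sum_add_distrib, sum_add_distrib] at hs
          omega
        calc ∑ d, max (ℓ d) (((insert e A) ∩ Vc d).card)
            ≤ (∑ d, max (ℓ d) ((A ∩ Vc d).card)) + 1 := by
              have hb : ∀ d ∈ Finset.univ, max (ℓ d) (((insert e A) ∩ Vc d).card) ≤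
                  max (ℓ d) ((A ∩ Vc d).card) + (if d = c then 1 else 0) := by
                intro d _
                rw [hins c e hec heA d]
                rcases eq_or_ne d c with rfl | hdc
                · rw [if_pos rfl]
                  omega
                · simp [hdc]
              calc ∑ d, max (ℓ d) (((insert e A) ∩ Vc d).card)
                  ≤ ∑ d, (max (ℓ d) ((A ∩ Vc d).card) + if d = c then 1 else 0) :=
                    sum_le_sum hb
                _ = (∑ d, max (ℓ d) ((A ∩ Vc d).card)) + 1 := by
                    rw [sum_add_distrib, sum_ite_eq' Finset.univ c (fun _ => 1)]
                    simp
          _ ≤ ∑ d, max (ℓ d) ((B ∩ Vc d).card) := hmono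
          _ ≤ k := hBk
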